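/- Assume q^{2l} = 1 where l ≥ 2 is the smallest positive integer with this property. Let c, x₀, c'₂ ∈ ℂ and x₋ ∈ ℂ with x₋ ≠ 0; set d² := c² − λ²c'₂. Let V = ℂ^l with basis v₀, …, v_{l−1}, indices taken modulo l, and define linear endomorphisms by: ρ_C v_p = c v_p; ρ₀ v_p = (q^{2p} x₀ − q^p [p] c) v_p; ρ₋ v_p = x₋ v_{p+1}; ρ₊ v_p = x₋⁻¹ λ⁻² ( −d² + (1+q⁻²) c (c−λx₀) q^{2p} − q⁻² (c−λx₀)² q^{4p} ) v_{p−1}. Then (ρ₀, ρ₊, ρ₋, ρ_C) is a representation of B on V, and moreover ρ₋ρ₊ + q⁻¹ρ_Cρ₀ + q⁻²ρ₀² = c'₂·id. -/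

import Mathlib

noncomputable section

namespace SL2q

/-- The q-number [p] = (q^p − q^{−p})/(q − q⁻¹). -/
def qNum (q : ℂ) (p : ℕ) : ℂ := (q ^ p - q⁻¹ ^ p) / (q - q⁻¹)

set_option maxHeartbeats 1600000 in
/-- the explicit l-dimensional (periodic) action with x₋ ≠ 0
(basis v₀,…,v_{l−1}, indices mod l):
ρ_C v_p = c v_p, ρ₀ v_p = (q^{2p}x₀ − q^p[p]c) v_p, ρ₋ v_p = x₋ v_{p+1},
ρ₊ v_p = x₋⁻¹λ⁻²(−d² + (1+q⁻²)c(c−λx₀)q^{2p} − q⁻²(c−λx₀)²q^{4p}) v_{p−1}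
defines a representation of B, on which C'₂ acts by the scalar c'₂. -/
theorem periodic_rep (q : ℂ) (hq : q ≠ 0) (hq2 : q ^ 2 ≠ 1)
    (l : ℕ) (hl : 2 ≤ l) (hq2l : q ^ (2 * l) = 1)
    (hmin : ∀ m : ℕ, 0 < m → m < l → q ^ (2 * m) ≠ 1)
    (c x0 c2 xm : ℂ) (hxm : xm ≠ 0) :
    let d2 : ℂ := c ^ 2 - (q - q⁻¹) ^ 2 * c2
    let MC : Matrix (Fin l) (Fin l) ℂ := c • 1
    let M0 : Matrix (Fin l) (Fin l) ℂ :=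
      Matrix.diagonal fun p => q ^ (2 * (p : ℕ)) * x0 - q ^ (p : ℕ) * qNum q (p : ℕ) * c
    let Mm : Matrix (Fin l) (Fin l) ℂ :=
      Matrix.of fun i j => if (i : ℕ) = ((j : ℕ) + 1) % l then xm else 0
    let Mp : Matrix (Fin l) (Fin l) ℂ :=
      Matrix.of fun i j =>
        if ((i : ℕ) + 1) % l = (j : ℕ) then
          xm⁻¹ * ((q - q⁻¹) ^ 2)⁻¹ *
            (-d2 + (1 + q⁻¹ ^ 2) * c * (c - (q - q⁻¹) * x0) * q ^ (2 * (j : ℕ))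
              - q⁻¹ ^ 2 * (c - (q - q⁻¹) * x0) ^ 2 * q ^ (4 * (j : ℕ)))
        else 0
    ((q ^ 2 : ℂ) • (M0 * Mp) - Mp * M0 = q • (MC * Mp)) ∧
    ((q⁻¹ ^ 2 : ℂ) • (M0 * Mm) - Mm * M0 = -(q⁻¹ • (MC * Mm))) ∧
    (Mp * Mm - Mm * Mp = ((q + q⁻¹) : ℂ) • ((MC - (q - q⁻¹) • M0) * M0)) ∧
    (MC * M0 = M0 * MC) ∧ (MC * Mp = Mp * MC) ∧ (MC * Mm = Mm * MC) ∧
    (Mm * Mp + q⁻¹ • (MC * M0) + (q⁻¹ ^ 2 : ℂ) • (M0 * M0) = c2 • 1) := by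
  intro d2 MC M0 Mm Mp
  haveI : NeZero l := ⟨by omega⟩
  have h3 : q * q - 1 ≠ 0 := by
    intro h; exact hq2 (by rw [pow_two]; linear_combination h)
  have h4 : q ^ 9 - q ^ 11 * 2 + q ^ 13 ≠ 0 := by
    have e : q ^ 9 - q ^ 11 * 2 + q ^ 13 = q ^ 9 * (q * q - 1) ^ 2 := by ring
    rw [e]; exact mul_ne_zero (pow_ne_zero _ hq) (pow_ne_zero _ h3)
  have hqn : ∀ p : ℕ, q ^ p * qNum q p = (q ^ (2 * p) - 1) / (q - q⁻¹) := by
    intro p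
    rw [qNum, ← mul_div_assoc, inv_pow, mul_sub,
      mul_inv_cancel₀ (pow_ne_zero p hq), ← pow_add, two_mul]
  have hpow : ∀ n : ℕ, q ^ (2 * (n % l)) = q ^ (2 * n) := by
    intro n
    have h0 : n = l * (n / l) + n % l := (Nat.div_add_mod n l).symm
    have h : 2 * n = 2 * l * (n / l) + 2 * (n % l) := by
      conv_lhs => rw [h0]
      ring
    rw [h, pow_add, pow_mul q (2 * l) (n / l), hq2l, one_pow, one_mul]
  have hsucc : ∀ i : Fin l, ((i + 1 : Fin l) : ℕ) = ((i : ℕ) + 1) % l := by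
    intro i
    simp [Fin.add_def, Fin.val_one', Nat.mod_eq_of_lt (show 1 < l by omega)]
  have e2 : ∀ i : Fin l, q ^ (2 * ((i + 1 : Fin l) : ℕ)) = q ^ (2 * (i : ℕ)) * q ^ 2 := by
    intro i
    rw [hsucc, hpow, show 2 * ((i : ℕ) + 1) = 2 * (i : ℕ) + 2 by ring, pow_add]
  have hA : ∀ z w : ℂ, xm⁻¹ * z * w * xm = z * w := by
    intro z w; field_simp
  have hB : ∀ z w : ℂ, xm * (xm⁻¹ * z * w) = z * w := by
    intro z w; field_simp
  -- scalar key identities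
  have key1 : ∀ t : ℂ,
      q ^ 2 * (t * x0 - (t - 1) / (q - q⁻¹) * c)
        - (t * q ^ 2 * x0 - (t * q ^ 2 - 1) / (q - q⁻¹) * c) = q * c := by
    intro t
    field_simp [h3]
    ring
  have key2 : ∀ t : ℂ,
      q⁻¹ ^ 2 * (t * q ^ 2 * x0 - (t * q ^ 2 - 1) / (q - q⁻¹) * c)
        - (t * x0 - (t - 1) / (q - q⁻¹) * c) = -(q⁻¹ * c) := by
    intro t
    field_simp [h3]
    ring
  have key3 : ∀ t : ℂ,
      ((q - q⁻¹) ^ 2)⁻¹ *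
          (-(c ^ 2 - (q - q⁻¹) ^ 2 * c2) + (1 + q⁻¹ ^ 2) * c * (c - (q - q⁻¹) * x0) * (t * q ^ 2)
            - q⁻¹ ^ 2 * (c - (q - q⁻¹) * x0) ^ 2 * (t * q ^ 2) ^ 2)
        - ((q - q⁻¹) ^ 2)⁻¹ *
          (-(c ^ 2 - (q - q⁻¹) ^ 2 * c2) + (1 + q⁻¹ ^ 2) * c * (c - (q - q⁻¹) * x0) * t
            - q⁻¹ ^ 2 * (c - (q - q⁻¹) * x0) ^ 2 * t ^ 2)
        = (q + q⁻¹) * ((c - (q - q⁻¹) * (t * x0 - (t - 1) / (q - q⁻¹) * c))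
            * (t * x0 - (t - 1) / (q - q⁻¹) * c)) := by
    intro t
    have hlam : q - q⁻¹ ≠ 0 := by
      intro h; apply h3; field_simp at h; linear_combination h
    have h5 : q ^ 2 - 1 ≠ 0 := by rw [pow_two]; exact h3
    field_simp [h5]
    ring
  have key4 : ∀ t : ℂ,
      ((q - q⁻¹) ^ 2)⁻¹ *
          (-(c ^ 2 - (q - q⁻¹) ^ 2 * c2) + (1 + q⁻¹ ^ 2) * c * (c - (q - q⁻¹) * x0) * t
            - q⁻¹ ^ 2 * (c - (q - q⁻¹) * x0) ^ 2 * t ^ 2)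
        + q⁻¹ * (c * (t * x0 - (t - 1) / (q - q⁻¹) * c))
        + q⁻¹ ^ 2 * ((t * x0 - (t - 1) / (q - q⁻¹) * c) * (t * x0 - (t - 1) / (q - q⁻¹) * c))
        = c2 := by
    intro t
    have hlam : q - q⁻¹ ≠ 0 := by
      intro h; apply h3; field_simp at h; linear_combination h
    have h5 : q ^ 2 - 1 ≠ 0 := by rw [pow_two]; exact h3
    field_simp [h5]
    ring
  -- clean forms of the matrices
  set G : Fin l → ℂ := fun p =>
    xm⁻¹ * ((q - q⁻¹) ^ 2)⁻¹ *
      (-(c ^ 2 - (q - q⁻¹) ^ 2 * c2)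
        + (1 + q⁻¹ ^ 2) * c * (c - (q - q⁻¹) * x0) * q ^ (2 * (p : ℕ))
        - q⁻¹ ^ 2 * (c - (q - q⁻¹) * x0) ^ 2 * (q ^ (2 * (p : ℕ))) ^ 2) with hG
  have hMC : MC = c • 1 := rfl
  have hM0 : M0 = Matrix.diagonal
      (fun p : Fin l => q ^ (2 * (p : ℕ)) * x0 - (q ^ (2 * (p : ℕ)) - 1) / (q - q⁻¹) * c) := by
    simp only [M0]
    refine congrArg Matrix.diagonal (funext fun p => ?_)
    rw [hqn]
  have hMm : Mm = Matrix.of (fun i j : Fin l => if j = i - 1 then xm else 0) := by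
    ext i j
    simp only [Mm, Matrix.of_apply]
    have hc : ((i : ℕ) = ((j : ℕ) + 1) % l) ↔ (j = i - 1) := by
      rw [← hsucc j, eq_comm, Fin.val_eq_val, eq_sub_iff_add_eq, eq_comm]
    rw [if_congr hc rfl rfl]
  have hMp : Mp = Matrix.of (fun i j : Fin l => if j = i + 1 then G j else 0) := by
    ext i j
    simp only [Mp, d2, Matrix.of_apply]
    have hc : (((i : ℕ) + 1) % l = (j : ℕ)) ↔ (j = i + 1) := by
      rw [← hsucc i, Fin.val_eq_val, eq_comm]
    have h4j : q ^ (4 * (j : ℕ)) = (q ^ (2 * (j : ℕ))) ^ 2 := by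
      rw [← pow_mul, show 2 * (j : ℕ) * 2 = 4 * (j : ℕ) by ring]
    rw [h4j, if_congr hc rfl rfl]
  clear_value d2 MC M0 Mm Mp
  subst hMC hM0 hMm hMp
  -- product collapse lemmas
  have hPM : (Matrix.of (fun i j : Fin l => if j = i + 1 then G j else 0)
        * Matrix.of (fun i j : Fin l => if j = i - 1 then xm else 0))
      = Matrix.of (fun i j : Fin l => if j = i then G (i + 1) * xm else 0) := by
    ext i j
    simp only [Matrix.mul_apply, Matrix.of_apply]
    rw [Finset.sum_eq_single (i + 1)]
    · by_cases h : j = i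
      · subst h; simp [add_sub_cancel_right]
      · simp [h, add_sub_cancel_right]
    · intro b _ hb; simp [hb]
    · intro hnot; exact absurd (Finset.mem_univ _) hnot
  have hMM : (Matrix.of (fun i j : Fin l => if j = i - 1 then xm else 0)
        * Matrix.of (fun i j : Fin l => if j = i + 1 then G j else 0))
      = Matrix.of (fun i j : Fin l => if j = i then xm * G i else 0) := by
    ext i j
    simp only [Matrix.mul_apply, Matrix.of_apply]
    rw [Finset.sum_eq_single (i - 1)]
    · by_cases h : j = i
      · subst h; simp [sub_add_cancel]
      · simp [h, sub_add_cancel]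
    · intro b _ hb; simp [hb]
    · intro hnot; exact absurd (Finset.mem_univ _) hnot
  refine ⟨?_, ?_, ?_, ?_, ?_, ?_, ?_⟩
  · -- q^2 • (M0*Mp) - Mp*M0 = q • (MC*Mp)
    rw [Matrix.smul_mul, Matrix.one_mul]
    ext i j
    simp only [Matrix.sub_apply, Matrix.smul_apply, Matrix.diagonal_mul, Matrix.mul_diagonal,
      Matrix.of_apply, smul_eq_mul]
    split_ifs with h
    · subst h
      rw [e2 i]
      linear_combination G (i + 1) * key1 (q ^ (2 * (i : ℕ)))
    · simp
  · -- q⁻¹^2 • (M0*Mm) - Mm*M0 = -(q⁻¹ • (MC*Mm))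
    rw [Matrix.smul_mul, Matrix.one_mul]
    ext i j
    simp only [Matrix.sub_apply, Matrix.smul_apply, Matrix.neg_apply, Matrix.diagonal_mul,
      Matrix.mul_diagonal, Matrix.of_apply, smul_eq_mul]
    split_ifs with h
    · subst h
      have e : q ^ (2 * (i : ℕ)) = q ^ (2 * ((i - 1 : Fin l) : ℕ)) * q ^ 2 := by
        have := e2 (i - 1)
        rwa [sub_add_cancel] at this
      rw [e]
      linear_combination xm * key2 (q ^ (2 * ((i - 1 : Fin l) : ℕ)))
    · simp
  · -- Mp*Mm - Mm*Mp = (q+q⁻¹) • ((MC - λ•M0)*M0)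
    rw [hPM, hMM]
    ext i j
    simp only [Matrix.sub_apply, Matrix.of_apply, Matrix.smul_apply, Matrix.mul_diagonal,
      Matrix.diagonal_apply, Matrix.one_apply, smul_eq_mul]
    by_cases h : j = i
    · subst h
      simp only [eq_self_iff_true, if_true]
      simp only [hG]
      rw [e2 j, hA, hB]
      linear_combination key3 (q ^ (2 * (j : ℕ)))
    · simp [h, Ne.symm h]
  · rw [Matrix.smul_mul, Matrix.mul_smul, Matrix.one_mul, Matrix.mul_one]
  · rw [Matrix.smul_mul, Matrix.mul_smul, Matrix.one_mul, Matrix.mul_one]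
  · rw [Matrix.smul_mul, Matrix.mul_smul, Matrix.one_mul, Matrix.mul_one]
  · -- Mm*Mp + q⁻¹•(MC*M0) + q⁻²•(M0*M0) = c2•1
    rw [hMM, Matrix.smul_mul, Matrix.one_mul, Matrix.diagonal_mul_diagonal]
    ext i j
    simp only [Matrix.add_apply, Matrix.smul_apply, Matrix.of_apply, Matrix.diagonal_apply,
      Matrix.one_apply, smul_eq_mul]
    by_cases h : j = i
    · subst h
      simp only [eq_self_iff_true, if_true]
      simp only [hG]
      rw [hB]
      linear_combination key4 (q ^ (2 * (j : ℕ)))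
    · simp [h, Ne.symm h]

end SL2q
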